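/- Let G be a finite cyclic group of odd order and let 𝒮 be a normal S-ring partition over G (the group of right translations is a normal subgroup of Aut(𝒮)). Then every normalized isomorphism from (G,𝒮) to itself is an automorphism of the group G: if f : G → G is a bijection with f(1) = 1 such that for every X ∈ 𝒮 there exists X' ∈ 𝒮 with the property that for all x,y ∈ G one has yx⁻¹ ∈ X if and only if f(y)f(x)⁻¹ ∈ X', then f is a group automorphism of G. -/

import Mathlib

/-- An S-ring partition over a group `G`: a partition of `G` containing `{1}`,
closed under taking inverses, and with well-defined structure constants. -/
def IsSRing {G : Type*} [Group G] (S : Set (Set G)) : Prop :=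
  Setoid.IsPartition S ∧
  {(1 : G)} ∈ S ∧
  (∀ X ∈ S, (fun x : G => x⁻¹) '' X ∈ S) ∧
  (∀ X ∈ S, ∀ Y ∈ S, ∀ Z ∈ S, ∀ z ∈ Z, ∀ z' ∈ Z,
    {p : G × G | p.1 ∈ X ∧ p.2 ∈ Y ∧ p.1 * p.2 = z}.ncard =
    {p : G × G | p.1 ∈ X ∧ p.2 ∈ Y ∧ p.1 * p.2 = z'}.ncard)

/-- An `S`-set: a union of classes of the partition `S`. -/
def IsSSet {G : Type*} (S : Set (Set G)) (X : Set G) : Prop :=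
  ∃ T ⊆ S, X = ⋃₀ T

/-- An automorphism of the S-ring `S`: a permutation `f` of `G` such that
for all `x, y` and all `X ∈ S`, `y·x⁻¹ ∈ X` iff `f(y)·f(x)⁻¹ ∈ X`. -/
def IsSRingAut {G : Type*} [Group G] (S : Set (Set G)) (f : Equiv.Perm G) : Prop :=
  ∀ X ∈ S, ∀ x y : G, (y * x⁻¹ ∈ X ↔ f y * (f x)⁻¹ ∈ X)

/-- The S-ring `S` is normal: the group of right translations is a normal
subgroup of `Aut(S)`, i.e. every automorphism of `S` conjugates each right
translation to a right translation. -/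
def IsNormalSRing {G : Type*} [Group G] (S : Set (Set G)) : Prop :=
  ∀ f : Equiv.Perm G, IsSRingAut S f →
    ∀ g : G, ∃ g' : G, ∀ x : G, f (x * g) = f x * g'

/-- every normalized isomorphism of a normal S-ring over a
finite cyclic group of odd order to itself is a group automorphism of `G`. -/
theorem normal_sring_normalized_iso_is_group_aut {G : Type*} [Group G]
    [Fintype G] [IsCyclic G] (hodd : Odd (Fintype.card G))
    (S : Set (Set G)) (hS : IsSRing S) (hnorm : IsNormalSRing S)
    (f : G → G) (hbij : Function.Bijective f) (hone : f 1 = 1)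
    (hiso : ∀ X ∈ S, ∃ X' ∈ S, ∀ x y : G, (y * x⁻¹ ∈ X ↔ f y * (f x)⁻¹ ∈ X')) :
    ∀ a b : G, f (a * b) = f a * f b := by
  classical
  intro a b
  have hinj : Function.Injective f := hbij.injective
  -- commutativity of G
  obtain ⟨z, hz⟩ := IsCyclic.exists_generator (α := G)
  have hcomm : ∀ x y : G, x * y = y * x := by
    intro x y
    obtain ⟨i, hi⟩ := Subgroup.mem_zpowers_iff.mp (hz x)
    obtain ⟨j, hj⟩ := Subgroup.mem_zpowers_iff.mp (hz y)
    subst hi; subst hj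
    rw [← zpow_add, ← zpow_add, add_comm]
  have hcommute : ∀ a b : G, Commute a b := fun a b => hcomm a b
  -- square roots exist (odd order)
  have hsq : ∀ u : G, ∃ x : G, x * x = u := by
    intro u
    obtain ⟨m, hm⟩ := hodd
    refine ⟨u ^ (m + 1), ?_⟩
    rw [← pow_add, show m + 1 + (m + 1) = (2 * m + 1) + 1 by ring, ← hm,
      pow_succ, pow_card_eq_one, one_mul]
  -- the maps k g
  have hsigma : ∀ g : G, ∃ kg : Equiv.Perm G,
      (∀ x, f (kg x * g) = f x * f g) ∧ IsSRingAut S kg := by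
    intro g
    set F : Equiv.Perm G := Equiv.ofBijective f hbij with hF
    set A : Equiv.Perm G := (Equiv.mulRight g).trans (F.trans (Equiv.mulRight (f g)⁻¹)) with hA
    have hAy : ∀ y, A y = f (y * g) * (f g)⁻¹ := by
      intro y
      simp [hA, hF, Equiv.trans_apply]
    have p1 : ∀ x, f ((F.trans A.symm) x * g) = f x * f g := by
      intro x
      have h0 : A ((F.trans A.symm) x) = f x := by
        show A (A.symm (F x)) = f x
        rw [Equiv.apply_symm_apply]
        rfl
      rw [hAy] at h0
      rw [← h0]; group
    refine ⟨F.trans A.symm, p1, ?_⟩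
    intro X hX x y
    obtain ⟨X', hX', hXX'⟩ := hiso X hX
    have e3 : f ((F.trans A.symm) y * g) * (f ((F.trans A.symm) x * g))⁻¹
        = f y * (f x)⁻¹ := by rw [p1, p1]; group
    have e4 : ((F.trans A.symm) y * g) * ((F.trans A.symm) x * g)⁻¹
        = (F.trans A.symm) y * ((F.trans A.symm) x)⁻¹ := by group
    calc y * x⁻¹ ∈ X ↔ f y * (f x)⁻¹ ∈ X' := hXX' x y
      _ ↔ f ((F.trans A.symm) y * g) * (f ((F.trans A.symm) x * g))⁻¹ ∈ X' := by rw [e3]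
      _ ↔ ((F.trans A.symm) y * g) * ((F.trans A.symm) x * g)⁻¹ ∈ X :=
          (hXX' ((F.trans A.symm) x * g) ((F.trans A.symm) y * g)).symm
      _ ↔ (F.trans A.symm) y * ((F.trans A.symm) x)⁻¹ ∈ X := by rw [e4]
  choose k hkf hkaut using hsigma
  have hk1 : ∀ g : G, k g 1 = 1 := by
    intro g
    have h := hkf g 1
    rw [hone, one_mul] at h
    exact mul_eq_right.mp (hinj h)
  have hk_mul : ∀ g x y : G, k g (x * y) = k g x * k g y := by
    intro g x y
    obtain ⟨y', hy'⟩ := hnorm (k g) (hkaut g) y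
    have h1 := hy' 1
    rw [one_mul, hk1 g, one_mul] at h1
    have h2 := hy' x
    rw [h2, h1]
  have hk1id : ∀ x : G, k 1 x = x := by
    intro x
    have h := hkf 1 x
    rw [hone, mul_one, mul_one] at h
    exact hinj h
  -- powers
  have hEex : ∀ g : G, ∃ m : ℤ, ∀ x : G, k g x = x ^ m := by
    intro g
    obtain ⟨m, hm⟩ := MonoidHom.map_cyclic (MonoidHom.mk' (⇑(k g)) (hk_mul g))
    exact ⟨m, fun x => hm x⟩
  choose E hE' using hEex
  have hE1 : ∀ x : G, x ^ E 1 = x := fun x => by rw [← hE' 1 x]; exact hk1id x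
  have hpow : ∀ g x : G, f (x ^ E g * g) = f x * f g := by
    intro g x; rw [← hE' g x]; exact hkf g x
  have hR1eq : ∀ x g : G, x ^ E g * g = g ^ E x * x := by
    intro x g
    apply hinj
    rw [hpow g x, hpow x g]
    exact hcomm (f x) (f g)
  have hR1' : ∀ x g : G, x ^ (E g - 1) = g ^ (E x - 1) := by
    intro x g
    have h := hR1eq x g
    have h2 : x ^ E g = g ^ E x * (x * g⁻¹) := by
      rw [← mul_assoc, ← h]; group
    rw [zpow_sub_one, zpow_sub_one, h2, hcomm x g⁻¹]
    group
  -- key identity for q x = x ^ E x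
  have hq_diff : ∀ x y : G, y ^ E y * (x ^ E x)⁻¹ = (y * x⁻¹) ^ E (y * x) := by
    intro x y
    have h1 : x ^ (E (y * x) - 1) = y ^ (E x - 1) * x ^ (E x - 1) := by
      rw [← Commute.mul_zpow (hcommute y x)]; exact hR1' x (y * x)
    have h2 : y ^ (E (y * x) - 1) = y ^ (E y - 1) * x ^ (E y - 1) := by
      rw [← Commute.mul_zpow (hcommute y x)]; exact hR1' y (y * x)
    have h3 : x ^ (E y - 1) = y ^ (E x - 1) := hR1' x y
    have k2 : y ^ (E (y * x) - E y) = x ^ (E y - 1) := by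
      rw [show E (y * x) - E y = (E (y * x) - 1) + (1 - E y) by ring, zpow_add, h2,
        mul_assoc, hcomm (x ^ (E y - 1)) (y ^ (1 - E y)), ← mul_assoc, ← zpow_add,
        show (E y - 1) + (1 - E y) = 0 by ring, zpow_zero, one_mul]
    have k1 : x ^ (E (y * x) - E x) = y ^ (E x - 1) := by
      rw [show E (y * x) - E x = (E (y * x) - 1) + (1 - E x) by ring, zpow_add, h1,
        mul_assoc, ← zpow_add, show (E x - 1) + (1 - E x) = 0 by ring, zpow_zero, mul_one]
    have k4 : y ^ (E (y * x) - E y) = x ^ (E (y * x) - E x) := by rw [k2, k1]; exact h3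
    have k4' : y ^ (E y - E (y * x)) = x ^ (E x - E (y * x)) := by
      rw [show E y - E (y * x) = -(E (y * x) - E y) by ring,
        show E x - E (y * x) = -(E (y * x) - E x) by ring, zpow_neg, zpow_neg, k4]
    have hr : (y * x⁻¹) ^ E (y * x) = y ^ E (y * x) * (x ^ E (y * x))⁻¹ := by
      rw [Commute.mul_zpow (hcommute y x⁻¹), inv_zpow]
    have ey : y ^ E y = y ^ E (y * x) * y ^ (E y - E (y * x)) := by
      rw [← zpow_add]; congr 1; ring
    rw [hr, ey, k4', mul_assoc]
    congr 1
    rw [← zpow_neg, ← zpow_neg, ← zpow_add]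
    congr 1; ring
  -- q is injective
  have hqinj : Function.Injective (fun t : G => t ^ E t) := by
    intro x y hxy
    simp only at hxy
    have h := hq_diff x y
    rw [← hxy] at h
    have h1 : (y * x⁻¹) ^ E (y * x) = 1 := by
      rw [← h, hxy]
      group
    have h2 : k (y * x) (y * x⁻¹) = k (y * x) 1 := by
      rw [hE' (y * x) (y * x⁻¹), hk1, h1]
    have h3 := (k (y * x)).injective h2
    exact (mul_inv_eq_one.mp h3).symm
  set Q : Equiv.Perm G :=
    Equiv.ofBijective (fun t : G => t ^ E t) (Finite.injective_iff_bijective.mp hqinj) with hQ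
  have hQapp : ∀ t : G, Q t = t ^ E t := fun t => rfl
  have hQaut : IsSRingAut S Q := by
    intro X hX x y
    have h := hkaut (y * x) X hX x y
    have e : Q y * (Q x)⁻¹ = k (y * x) y * (k (y * x) x)⁻¹ := by
      rw [hQapp, hQapp, hq_diff x y, hE', hE', Commute.mul_zpow (hcommute y x⁻¹), inv_zpow]
    rw [e]
    exact h
  -- normality applied to Q
  have hkey : ∀ x g : G, g ^ E (x * g * x) = g ^ E g := by
    intro x g
    obtain ⟨g', hg'⟩ := hnorm Q hQaut g
    have h1 := hg' 1
    rw [one_mul] at h1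
    have hQ1 : Q 1 = 1 := by rw [hQapp]; exact one_zpow _
    rw [hQ1, one_mul] at h1
    have h2 := hg' x
    rw [← h1] at h2
    have h3 : ((x * g) * x⁻¹) ^ E ((x * g) * x) = g ^ E g := by
      rw [← hq_diff x (x * g)]
      show Q (x * g) * (Q x)⁻¹ = g ^ E g
      rw [h2, hcomm (Q x) (Q g), mul_assoc, mul_inv_cancel, mul_one, hQapp]
    have h4 : (x * g) * x⁻¹ = g := by rw [hcomm x g]; group
    rw [h4] at h3
    exact h3
  have hEgg : ∀ u g : G, g ^ E u = g ^ E g := by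
    intro u g
    obtain ⟨w, hw⟩ := hsq (u * g⁻¹)
    have h5 : w * g * w = u := by
      rw [mul_assoc, hcomm g w, ← mul_assoc, hw, inv_mul_cancel_right]
    have h6 := hkey w g
    rw [h5] at h6
    exact h6
  have hfix : ∀ u g : G, g ^ E u = g := by
    intro u g
    rw [hEgg u g, ← hEgg 1 g, hE1]
  have h := hkf b a
  rw [hE' b a, hfix b a] at h
  exact h
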